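/- Let H be a Hilbert space with orthonormal basis (e_i). Let G = (½e₁, e₂, ¼e₁, e₃, ⅛e₁, e₄, …) and F = (e₁, e₂, e₁, e₃, e₁, e₄, …). Then for every f ∈ H, the series Σᵢ ⟨f, gᵢ⟩ fᵢ converges to f. -/

import Mathlib

open scoped RealInnerProductSpace

set_option maxHeartbeats 1000000 in
/-- With `G = (½e₁, e₂, ¼e₁, e₃, …)` and `F = (e₁, e₂, e₁, e₃, e₁, e₄, …)`,
for every `f ∈ H` the series `Σᵢ ⟨f, gᵢ⟩ fᵢ` converges to `f`. -/
theorem stmt_1 (H : Type*) [NormedAddCommGroup H] [InnerProductSpace ℝ H]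
    (e : HilbertBasis ℕ ℝ H) (g F : ℕ → H)
    (hg : ∀ k : ℕ, g (2 * k) = ((2 : ℝ) ^ (k + 1))⁻¹ • e 0 ∧ g (2 * k + 1) = e (k + 1))
    (hF : ∀ k : ℕ, F (2 * k) = e 0 ∧ F (2 * k + 1) = e (k + 1)) :
    ∀ f : H, Filter.Tendsto (fun n => ∑ i ∈ Finset.range n, ⟪f, g i⟫ • F i)
      Filter.atTop (nhds f) := by
  intro f
  have hrepr : HasSum (fun i => ⟪f, e i⟫ • e i) f := by
    have h := e.hasSum_repr f
    simp only [e.repr_apply_apply] at h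
    simpa only [real_inner_comm] using h
  -- odd part
  have hodd : HasSum (fun k : ℕ => ⟪f, g (2 * k + 1)⟫ • F (2 * k + 1))
      (f - ⟪f, e 0⟫ • e 0) := by
    have h1 : HasSum (fun k : ℕ => (fun i => ⟪f, e i⟫ • e i) (k + 1))
        (f - ⟪f, e 0⟫ • e 0) :=
      (hasSum_nat_add_iff (f := fun i => ⟪f, e i⟫ • e i) 1).2 (by simpa using hrepr)
    have heq : (fun k : ℕ => ⟪f, g (2 * k + 1)⟫ • F (2 * k + 1))
        = fun k : ℕ => (fun i => ⟪f, e i⟫ • e i) (k + 1) := by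
      funext k
      simp only [(hg k).2, (hF k).2]
    rw [heq]
    exact h1
  -- geometric series
  have hgeo : HasSum (fun k : ℕ => ((2 : ℝ) ^ (k + 1))⁻¹) 1 := by
    have h := (hasSum_geometric_of_lt_one (r := (1/2 : ℝ)) (by norm_num)
      (by norm_num)).mul_left (1/2 : ℝ)
    have heq : (fun k : ℕ => ((2 : ℝ) ^ (k + 1))⁻¹)
        = fun k : ℕ => (1/2 : ℝ) * (1/2) ^ k := by
      funext k
      rw [pow_succ]
      field_simp
      rw [← mul_pow]
      norm_num
    rw [heq]
    rw [show (1/2 : ℝ) * (1 - 1/2)⁻¹ = 1 by norm_num] at h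
    exact h
  -- even part
  have heven : HasSum (fun k : ℕ => ⟪f, g (2 * k)⟫ • F (2 * k)) (⟪f, e 0⟫ • e 0) := by
    have h2 := hgeo.smul_const (⟪f, e 0⟫ • e 0)
    rw [one_smul] at h2
    have heq : (fun k : ℕ => ⟪f, g (2 * k)⟫ • F (2 * k))
        = fun k : ℕ => ((2 : ℝ) ^ (k + 1))⁻¹ • (⟪f, e 0⟫ • e 0) := by
      funext k
      rw [(hg k).1, (hF k).1, real_inner_smul_right, smul_smul]
    rw [heq]
    exact h2
  have hsum := HasSum.even_add_odd (f := fun i => ⟪f, g i⟫ • F i) heven hodd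
  rw [add_sub_cancel] at hsum
  exact hsum.tendsto_sum_nat
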